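/- Suppose a Dyck vector v starts with 0,0,1,2 and ends with a positive symbol. Then [v] is a NU₁-initial object, NU₁([v]) is defined and is a NU₁-final object, and mind(NU₁([v])) = mind([v]) + 1 = len(v) + 1. -/

import Mathlib

/-- dinv contribution of an entry coming from extended negative positions. -/
def negContrib (x : ℤ) : ℕ := (if x ≤ -1 then 1 else 0) + (if x ≤ -2 then 1 else 0)

/-- The diagonal inversion statistic of a quasi-Dyck vector, with the
convention `v_k = k - 1` for `k ≤ 0`. -/
def dinv (v : List ℤ) : ℕ :=
  (Finset.univ.filter (fun p : Fin v.length × Fin v.length =>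
      (p.1 : ℕ) < (p.2 : ℕ) ∧ (v.get p.1 - v.get p.2 = 0 ∨ v.get p.1 - v.get p.2 = 1))).card
  + (v.map negContrib).sum

def area (v : List ℤ) : ℤ := v.sum

def defc (v : List ℤ) : ℤ := (v.length.choose 2 : ℤ) - area v - (dinv v : ℤ)

/-- Quasi-Dyck vector: nonempty, starts with 0, consecutive increases ≤ 1. -/
def IsQDV (v : List ℤ) : Prop :=
  v.head? = some 0 ∧ ∀ i : ℕ, i + 1 < v.length → v.getD (i + 1) 0 ≤ v.getD i 0 + 1

def IsDyck (v : List ℤ) : Prop := IsQDV v ∧ ∀ x ∈ v, 0 ≤ x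

def stepRel (v w : List ℤ) : Prop := w = 0 :: v.map (· + 1)

def dyckEquiv : List ℤ → List ℤ → Prop := Relation.EqvGen stepRel

def dyckSetoid : Setoid (List ℤ) := Relation.EqvGen.setoid stepRel

abbrev DyckClass := Quotient dyckSetoid

def cls (v : List ℤ) : DyckClass := Quotient.mk dyckSetoid v

/-- Reduced Dyck vector: a Dyck vector that is not `0 z⁺` for a Dyck vector `z`. -/
def IsReducedDV (v : List ℤ) : Prop :=
  IsDyck v ∧ ¬ ∃ z : List ℤ, IsDyck z ∧ v = 0 :: z.map (· + 1)

/-- The leader of a QDV: the largest `d` such that `v` starts with `0,1,...,d`. -/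
def leader (v : List ℤ) : ℕ :=
  Nat.findGreatest (fun d => ∀ i, i ≤ d → v.getD i 0 = (i : ℤ)) (v.length - 1)

/-- Delete the leader symbol and append `leader - 1`. -/
def nuStep (v : List ℤ) : List ℤ :=
  v.take (leader v) ++ v.drop (leader v + 1) ++ [(leader v : ℤ) - 1]

def nuApplies (v : List ℤ) : Prop :=
  IsQDV v ∧ 2 ≤ v.length ∧ 0 ≤ v.getD 1 0 ∧ (leader v : ℤ) ≤ v.getLastD 0 + 2

/-- The map NU₁ on Dyck classes, as a relation. -/
def nuClassRel (c c' : DyckClass) : Prop :=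
  ∃ v, nuApplies v ∧ c = cls v ∧ c' = cls (nuStep v)

def stepOk (A : List ℤ) : Prop := ∀ i : ℕ, i + 1 < A.length → A.getD (i + 1) 0 ≤ A.getD i 0 + 1

def okA (A : List ℤ) : Prop :=
  A = [] ∨ ((∀ x ∈ A, x ≤ 2) ∧ 0 ≤ A.getLastD 0 ∧ stepOk A)

def okB (B : List ℤ) : Prop :=
  B = [] ∨ ((∀ x ∈ B, x ≤ 2) ∧ B.headD 0 ≤ 1 ∧ -1 ≤ B.getLastD 0 ∧ stepOk B)

/-- The map NU₂ on Dyck classes, as a relation. -/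
def nu2ClassRel (c c' : DyckClass) : Prop :=
  (∃ (h : ℕ) (A : List ℤ), 2 ≤ h ∧ okA A ∧
      c = cls ([0, 1] ++ List.replicate h (2:ℤ) ++ A ++ List.replicate (h - 1) (-1)) ∧
      c' = cls (List.replicate h (0:ℤ) ++ [1] ++ A ++ List.replicate h 1)) ∨
  (∃ (k : ℕ) (B : List ℤ), 1 ≤ k ∧ okB B ∧
      c = cls ([0, 1] ++ List.replicate k (2:ℤ) ++ B ++ List.replicate k (-1)) ∧
      c' = cls (List.replicate (k + 1) (0:ℤ) ++ B ++ [0] ++ List.replicate k 1))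

/-- The extended next-up map NU = NU₁ ∪ NU₂, as a relation on Dyck classes. -/
def nuRel (c c' : DyckClass) : Prop := nuClassRel c c' ∨ nu2ClassRel c c'

/-- An integer partition, given by its weakly decreasing list of positive parts. -/
def IsPartitionList (l : List ℕ) : Prop := l.Pairwise (· ≥ ·) ∧ ∀ x ∈ l, 0 < x

/-- `phi l n` = the QDV `(0 - λ_n, 1 - λ_{n-1}, ..., (n-1) - λ_1)`. -/
def phi (l : List ℕ) (n : ℕ) : List ℤ :=
  List.ofFn (fun i : Fin n => (i : ℤ) - (l.getD (n - 1 - (i : ℕ)) 0 : ℤ))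

def nuOne (g : List ℕ) : List ℕ :=
  (g.length + 1) :: (g.map (· - 1)).filter (fun x => 0 < x)

def ndOne (g : List ℕ) : List ℕ :=
  g.tail.map (· + 1) ++ List.replicate (g.headD 0 - g.length) 1

/-- dinv of a partition: number of cells with arm - leg ∈ {0,1}. -/
def pdinv (l : List ℕ) : ℕ :=
  (Finset.univ.filter (fun c : Fin l.length × Fin (l.headD 0) =>
    (c.2 : ℕ) < l.get c.1 ∧
      (l.get c.1 - 1 - (c.2 : ℕ) =
          (Finset.univ.filter (fun i' : Fin l.length =>
            (c.1 : ℕ) < (i' : ℕ) ∧ (c.2 : ℕ) < l.get i')).card ∨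
        l.get c.1 - 1 - (c.2 : ℕ) =
          (Finset.univ.filter (fun i' : Fin l.length =>
            (c.1 : ℕ) < (i' : ℕ) ∧ (c.2 : ℕ) < l.get i')).card + 1))).card

/-- `bWord [n_1, ..., n_r]` = `0 1^{n_1} 0 1^{n_2} ⋯ 0 1^{n_r}`. -/
def bWord (ns : List ℕ) : List ℤ :=
  (ns.map (fun m => (0:ℤ) :: List.replicate m 1)).flatten

/-- `msize [n_1, ..., n_r] = Σ i·n_i`, the size of the partition `(r^{n_r},...,1^{n_1})`. -/
def msize (ns : List ℕ) : ℕ :=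
  (List.zipWith (fun m i => m * i) ns (List.range' 1 ns.length)).sum

/-- The reduced Dyck vector `0 B_μ` of the tail initiator of a partition. -/
def tiVec (l : List ℕ) : List ℤ :=
  (0:ℤ) :: ((List.range' 1 (l.headD 0)).map
    (fun i => (0:ℤ) :: List.replicate (l.count i) (1:ℤ))).flatten

/-- `c` is the second-order tail initiator of the partition `l`: obtained from
`[0 B_μ]` by iterating the extended next-down map as long as possible. -/
def IsTI2 (l : List ℕ) (c : DyckClass) : Prop :=
  Relation.ReflTransGen (fun x y => nuRel y x) (cls (tiVec l)) c ∧ ∀ d, ¬ nuRel d c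

/-- `m` is the minimum triangle height of the Dyck class `c`. -/
def mindIs (c : DyckClass) (m : ℕ) : Prop :=
  ∃ v, IsReducedDV v ∧ c = cls v ∧ v.length = m

/-- Flagpole partition: `|μ| + 8 ≤ 2 mind(TI₂(μ))`. -/
def IsFlagpole (l : List ℕ) : Prop :=
  ∃ c m, IsTI2 l c ∧ mindIs c m ∧ l.sum + 8 ≤ 2 * m

/-- The Dyck vector `v(λ,a,ε) = 0 0 1 2^{a-ε} B_λ⁺ 1^ε`. -/
def vLam (ns : List ℕ) (a ε : ℕ) : List ℤ :=
  [0, 0, 1] ++ List.replicate (a - ε) (2:ℤ) ++ (bWord ns).map (· + 1) ++ List.replicate ε 1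


def Dv (v : List ℤ) : List ℤ := List.zipWith (fun x (i : ℕ) => x - i) v (List.range v.length)

lemma Dv_length (v : List ℤ) : (Dv v).length = v.length := by simp [Dv]

lemma Dv_getD (v : List ℤ) (i : ℕ) (h : i < v.length) :
    (Dv v).getD i 0 = v.getD i 0 - i := by
  have h' : i < (Dv v).length := by rw [Dv_length]; exact h
  rw [List.getD_eq_getElem _ _ h', List.getD_eq_getElem _ _ h]
  simp [Dv]

lemma Dv_step (v : List ℤ) : Dv (0 :: v.map (· + 1)) = 0 :: Dv v := by
  apply List.ext_getElem
  · simp [Dv_length]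
  · intro i h1 h2
    have hl : i < (Dv (0 :: v.map (· + 1))).length := h1
    rw [Dv_length] at hl
    simp only [List.length_cons, List.length_map] at hl
    match i with
    | 0 => simp [Dv]
    | (j+1) =>
      have hj : j < v.length := by omega
      simp only [Dv, List.getElem_zipWith, List.getElem_range, List.getElem_cons_succ,
        List.getElem_map]
      push_cast
      ring

def rdv (v : List ℤ) : List ℤ := (Dv v).dropWhile (fun x => x == 0)

lemma rdv_equiv {u w : List ℤ} (h : dyckEquiv u w) : rdv u = rdv w := by
  induction h with
  | rel x y hxy =>
      rw [hxy]; unfold rdv; rw [Dv_step, List.dropWhile_cons_of_pos (by simp)]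
  | refl => rfl
  | symm _ _ _ ih => exact ih.symm
  | trans _ _ _ _ _ ih1 ih2 => exact ih1.trans ih2

lemma dropWhile_head_false {p : ℤ → Bool} : ∀ (l : List ℤ) (x : ℤ) (r : List ℤ),
    l.dropWhile p = x :: r → p x = false := by
  intro l
  induction l with
  | nil => intro x r h; simp at h
  | cons a l ih =>
      intro x r h
      by_cases ha : p a
      · rw [List.dropWhile_cons_of_pos ha] at h; exact ih x r h
      · rw [List.dropWhile_cons_of_neg ha] at h
        cases h; simpa using ha

lemma Dv_decomp (v : List ℤ) :
    ∃ k, Dv v = List.replicate k 0 ++ rdv v := by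
  refine ⟨((Dv v).takeWhile (fun x => x == 0)).length, ?_⟩
  have h1 : (Dv v).takeWhile (fun x => x == 0) =
      List.replicate ((Dv v).takeWhile (fun x => x == 0)).length (0:ℤ) := by
    apply List.eq_replicate_of_mem
    intro b hb
    have := List.mem_takeWhile_imp hb
    simpa using this
  conv_lhs => rw [← List.takeWhile_append_dropWhile (p := fun x => x == 0) (l := Dv v)]
  rw [← h1]; rfl

lemma rdv_head_ne {v : List ℤ} (h : rdv v ≠ []) : (rdv v).getD 0 0 ≠ 0 := by
  rcases hr : rdv v with _ | ⟨x, r⟩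
  · exact absurd hr h
  · have := dropWhile_head_false (Dv v) x r hr
    simp only [List.getD_cons_zero]
    simpa using this

lemma getLastD_eq_getD (l : List ℤ) (h : l ≠ []) : l.getLastD 0 = l.getD (l.length - 1) 0 := by
  rw [List.getLastD_eq_getLast?, List.getLast?_eq_getElem?, List.getD_eq_getElem?_getD]

lemma getLastD_mem (l : List ℤ) (h : l ≠ []) : l.getLastD 0 ∈ l := by
  have hl : l.length - 1 < l.length := by have := List.length_pos_iff.2 h; omega
  rw [getLastD_eq_getD l h, List.getD_eq_getElem _ _ hl]
  exact List.getElem_mem hl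

lemma leader_eq_k (w : List ℤ) (k : ℕ) (hk : 1 ≤ k) (hkl : k < w.length)
    (h0 : ∀ i < k, w.getD i 0 = i) (hne : w.getD k 0 ≠ k) : leader w = k - 1 := by
  unfold leader
  rw [Nat.findGreatest_eq_iff]
  refine ⟨by omega, fun _ i hi => h0 i (by omega), fun n hn hnb P => hne (P k (by omega))⟩

lemma leader_le (w : List ℤ) : leader w ≤ w.length - 1 := Nat.findGreatest_le _

lemma leader_spec (w : List ℤ) (h : leader w ≠ 0) : ∀ i ≤ leader w, w.getD i 0 = i := by
  have : Nat.findGreatest (fun d => ∀ i, i ≤ d → w.getD i 0 = (i : ℤ)) (w.length - 1) = leader w := rfl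
  exact (Nat.findGreatest_eq_iff.1 this).2.1 h

lemma getLastD_concat' (l : List ℤ) (x : ℤ) : (l ++ [x]).getLastD 0 = x := by
  rw [getLastD_eq_getD _ (by simp)]
  simp [List.getD_eq_getElem?_getD, List.getElem?_append_right (by simp : l.length ≤ l.length + 1 - 1)]

lemma getLastD_append_right (l1 l2 : List ℤ) (h : l2 ≠ []) :
    (l1 ++ l2).getLastD 0 = l2.getLastD 0 := by
  rw [List.getLastD_eq_getLast?, List.getLastD_eq_getLast?,
    List.getLast?_append_of_ne_nil _ h]

lemma dropWhile_eq_drop_one (l : List ℤ) (hlen : 2 ≤ l.length)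
    (h0 : l.getD 0 0 = 0) (h1 : l.getD 1 0 ≠ 0) :
    l.dropWhile (fun x => x == 0) = l.drop 1 := by
  match l with
  | a :: b :: r =>
    simp only [List.getD_cons_zero, List.getD_cons_succ] at h0 h1
    rw [List.dropWhile_cons_of_pos (by simp [h0]), List.dropWhile_cons_of_neg (by simpa using h1)]
    rfl

lemma Dv_getLastD (x : List ℤ) (h : x ≠ []) :
    (Dv x).getLastD 0 = x.getLastD 0 - (↑(x.length - 1) : ℤ) := by
  have hx : 0 < x.length := List.length_pos_iff.2 h
  have hDne : Dv x ≠ [] := by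
    apply List.ne_nil_of_length_pos
    rw [Dv_length]; omega
  rw [getLastD_eq_getD _ hDne, getLastD_eq_getD _ h, Dv_length]
  exact Dv_getD x (x.length - 1) (by omega)

lemma getD_replicate_zero (k i : ℕ) (h : i < k) :
    (List.replicate k (0:ℤ)).getD i 0 = 0 := by
  rw [List.getD_eq_getElem _ _ (by simp; omega)]
  simp

theorem stmt15 (v : List ℤ) (hv : IsDyck v) (h4 : v.take 4 = [0, 0, 1, 2])
    (hlast : 0 < v.getLastD 0) :
    (∀ c : DyckClass, ¬ nuClassRel c (cls v)) ∧
    nuApplies v ∧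
    (∀ c : DyckClass, ¬ nuClassRel (cls (nuStep v)) c) ∧
    IsReducedDV v ∧
    (∃ u, IsReducedDV u ∧ dyckEquiv u (nuStep v) ∧ u.length = v.length + 1) := by
  obtain ⟨⟨hhead, hstep⟩, hnn⟩ := hv
  have hlen4 : 4 ≤ v.length := by
    by_contra h
    have := congrArg List.length h4
    simp [List.length_take] at this
    omega
  have hkey : ∀ i, i < 4 → v.getD i 0 = ([0,0,1,2] : List ℤ).getD i 0 := by
    intro i hi
    have hlt : i < (v.take 4).length := by simp only [List.length_take]; omega
    have e1 : (v.take 4).getD i 0 = v.getD i 0 := by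
      rw [List.getD_eq_getElem _ _ hlt, List.getD_eq_getElem _ _ (by omega : i < v.length)]
      exact List.getElem_take ..
    rw [← e1, h4]
  have h0 : v.getD 0 0 = 0 := by simpa using hkey 0 (by omega)
  have h1 : v.getD 1 0 = 0 := by simpa using hkey 1 (by omega)
  have h2 : v.getD 2 0 = 1 := by simpa using hkey 2 (by omega)
  have h3 : v.getD 3 0 = 2 := by simpa using hkey 3 (by omega)
  have hvne : v ≠ [] := by intro h; rw [h] at hlen4; simp at hlen4
  have hgetDnn : ∀ i, i < v.length → 0 ≤ v.getD i 0 := by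
    intro i hi
    rw [List.getD_eq_getElem _ _ hi]
    exact hnn _ (List.getElem_mem hi)
  have hlastD : v.getLastD 0 = v.getD (v.length - 1) 0 := getLastD_eq_getD v hvne
  have hleadv : leader v = 0 := by
    unfold leader
    rw [Nat.findGreatest_eq_iff]
    refine ⟨Nat.zero_le _, fun h => absurd rfl h, fun n hn hnb P => ?_⟩
    have := P 1 (by omega)
    rw [h1] at this
    exact absurd this (by norm_num)
  have hnsv : nuStep v = v.drop 1 ++ [-1] := by
    simp [nuStep, hleadv]
  -- getD facts about v, Dv v
  have hDv0 : (Dv v).getD 0 0 = 0 := by rw [Dv_getD v 0 (by omega), h0]; simp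
  have hDv1 : (Dv v).getD 1 0 = -1 := by rw [Dv_getD v 1 (by omega), h1]; simp
  have hDvlen : (Dv v).length = v.length := Dv_length v
  have hDvne : Dv v ≠ [] := by apply List.ne_nil_of_length_pos; omega
  have hrdv_eq : rdv v = (Dv v).drop 1 := by
    unfold rdv
    exact dropWhile_eq_drop_one (Dv v) (by omega) hDv0 (by rw [hDv1]; norm_num)
  have hrdvlen : (rdv v).length = v.length - 1 := by
    rw [hrdv_eq]; simp [hDvlen]
  have hrdvne : rdv v ≠ [] := by
    apply List.ne_nil_of_length_pos; omega
  have hrdv0 : (rdv v).getD 0 0 = -1 := by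
    rw [hrdv_eq, List.getD_eq_getElem _ _ (by simp [hDvlen]; omega), List.getElem_drop,
      ← List.getD_eq_getElem _ _ (by omega : 1 + 0 < (Dv v).length)]
    exact hDv1
  have hrdvlast : (rdv v).getLastD 0 = v.getLastD 0 - (↑(v.length - 1) : ℤ) := by
    have e : (Dv v).getLastD 0 = ((Dv v).drop 1).getLastD 0 := by
      conv_lhs => rw [← List.take_append_drop 1 (Dv v)]
      exact getLastD_append_right _ _ (by apply List.ne_nil_of_length_pos; simp [hDvlen]; omega)
    rw [hrdv_eq, ← e]
    exact Dv_getLastD v hvne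
  -- Part 2 : nuApplies v
  have part2 : nuApplies v := by
    refine ⟨⟨hhead, hstep⟩, by omega, by rw [h1], ?_⟩
    rw [hleadv]
    have : 0 ≤ v.getLastD 0 := le_of_lt hlast
    push_cast
    omega
  -- Part 4 : IsReducedDV v
  have part4 : IsReducedDV v := by
    refine ⟨⟨⟨hhead, hstep⟩, hnn⟩, ?_⟩
    rintro ⟨z, hz, hvz⟩
    have hzlen : z.length + 1 = v.length := by
      rw [hvz]; simp
    have : v.getD 1 0 = z.getD 0 0 + 1 := by
      rw [hvz]
      rw [List.getD_cons_succ, List.getD_eq_getElem _ _ (by simp; omega),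
        List.getD_eq_getElem _ _ (by omega : 0 < z.length)]
      simp
    rw [h1] at this
    have hmem : z.getD 0 0 ∈ z := by
      rw [List.getD_eq_getElem _ _ (by omega : 0 < z.length)]
      exact List.getElem_mem _
    have := hz.2 _ hmem
    omega
  -- Part 5
  have part5 : ∃ u, IsReducedDV u ∧ dyckEquiv u (nuStep v) ∧ u.length = v.length + 1 := by
    refine ⟨(0:ℤ) :: (nuStep v).map (· + 1), ?_, ?_, ?_⟩
    · have hmapeq : (nuStep v).map (· + 1) = (v.drop 1).map (· + 1) ++ [(0:ℤ)] := by
        rw [hnsv]; simp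
      have hulen : ((0:ℤ) :: (nuStep v).map (· + 1)).length = v.length + 1 := by
        rw [hmapeq]; simp; omega
      have huj : ∀ j, 1 ≤ j → j ≤ v.length - 1 →
          ((0:ℤ) :: (nuStep v).map (· + 1)).getD j 0 = v.getD j 0 + 1 := by
        intro j hj1 hj2
        obtain ⟨j', rfl⟩ : ∃ j', j = j' + 1 := ⟨j - 1, by omega⟩
        rw [List.getD_cons_succ, hmapeq]
        have hj' : j' < ((v.drop 1).map (· + 1)).length := by simp; omega
        rw [List.getD_append _ _ _ _ hj', List.getD_eq_getElem _ _ hj',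
          List.getD_eq_getElem _ _ (by omega : j' + 1 < v.length)]
        simp [List.getElem_drop]
      have hulast : ((0:ℤ) :: (nuStep v).map (· + 1)).getD v.length 0 = 0 := by
        obtain ⟨n', hn'⟩ : ∃ n', v.length = n' + 1 := ⟨v.length - 1, by omega⟩
        rw [hn', List.getD_cons_succ, hmapeq,
          List.getD_append_right _ _ _ _ (by simp; omega)]
        simp
      refine ⟨⟨⟨rfl, ?_⟩, ?_⟩, ?_⟩
      · -- step condition
        intro i hi
        rw [hulen] at hi
        rcases Nat.eq_or_lt_of_le (Nat.one_le_iff_ne_zero.2 (by omega) : 1 ≤ i + 1) with h|h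
        · -- i = 0
          have hi0 : i = 0 := by omega
          subst hi0
          rw [huj 1 (by omega) (by omega), h1]
          norm_num
        · rcases Nat.lt_or_ge (i+1) v.length with h'|h'
          · -- middle
            by_cases hi1 : i = 0
            · subst hi1; omega
            · rw [huj (i+1) (by omega) (by omega), huj i (by omega) (by omega)]
              have := hstep i h'
              omega
          · -- i + 1 = v.length
            have : i + 1 = v.length := by omega
            rw [this, hulast, huj i (by omega) (by omega)]
            have := hgetDnn i (by omega)
            omega
      · -- nonneg
        intro x hx
        rw [hmapeq] at hx
        simp only [List.mem_cons, List.mem_append, List.mem_map, List.mem_singleton] at hx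
        rcases hx with rfl | ⟨a, ha, rfl⟩ | rfl | hx0
        · norm_num
        · have := hnn _ (List.mem_of_mem_drop ha)
          omega
        · norm_num
        · simp at hx0
      · -- not reducible
        rintro ⟨z, hz, hz2⟩
        have hmapinj : z.map (· + 1) = (nuStep v).map (· + 1) := by
          injection hz2.symm
        have hz3 : z = nuStep v :=
          List.map_injective_iff.2 (fun a b hab => by omega) hmapinj
        have hm : (-1 : ℤ) ∈ z := by rw [hz3, hnsv]; simp
        have := hz.2 _ hm
        omega
    · exact Relation.EqvGen.symm _ _ (Relation.EqvGen.rel _ _ rfl)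
    · rw [hnsv]; simp; omega
  -- Part 1
  have part1 : ∀ c : DyckClass, ¬ nuClassRel c (cls v) := by
    rintro c ⟨w, hw, -, hcv⟩
    have hequiv : dyckEquiv v (nuStep w) := Quotient.exact hcv
    have hrd : rdv v = rdv (nuStep w) := rdv_equiv hequiv
    obtain ⟨⟨hwhead, hwstep⟩, hwlen2, hw1, hwla⟩ := hw
    have hLle : leader w ≤ w.length - 1 := leader_le w
    have hwne : w ≠ [] := by intro h; rw [h] at hwlen2; simp at hwlen2
    have hw0 : w.getD 0 0 = 0 := by
      rcases w with _ | ⟨a, w'⟩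
      · simp at hwlen2
      · simp only [List.head?_cons, Option.some_inj] at hwhead
        simp [hwhead]
    have hLprop : ∀ i ≤ leader w, w.getD i 0 = (i:ℤ) := by
      rcases Nat.eq_zero_or_pos (leader w) with h|h
      · intro i hi; rw [h] at hi; interval_cases i; simpa using hw0
      · exact leader_spec w (by omega)
    have hns' : nuStep w = w.take (leader w) ++ w.drop (leader w + 1) ++ [(leader w:ℤ)-1] := rfl
    have hnslen : (nuStep w).length = w.length := by
      rw [hns']; simp; omega
    have hnsne : nuStep w ≠ [] := by
      apply List.ne_nil_of_length_pos; omega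
    have hnsi : ∀ i, i < leader w → (nuStep w).getD i 0 = (i:ℤ) := by
      intro i hi
      rw [hns', List.append_assoc]
      have hti : i < (w.take (leader w)).length := by simp; omega
      rw [List.getD_append _ _ _ _ hti, List.getD_eq_getElem _ _ hti, List.getElem_take,
        ← List.getD_eq_getElem _ _ (show i < w.length by omega)]
      exact hLprop i (le_of_lt hi)
    have hnslast : (nuStep w).getLastD 0 = (leader w : ℤ) - 1 := by
      rw [hns']
      exact getLastD_concat' _ _
    obtain ⟨m, hm⟩ := Dv_decomp (nuStep w)
    rw [← hrd] at hm
    have hlenw : w.length = m + (v.length - 1) := by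
      have := congrArg List.length hm
      rw [Dv_length, hnslen] at this
      simp [hrdvlen] at this
      omega
    have hLm : leader w ≤ m := by
      by_contra hcon
      push_neg at hcon
      have h1' : (Dv (nuStep w)).getD m 0 = (rdv v).getD 0 0 := by
        rw [hm, List.getD_append_right _ _ _ _ (by simp)]
        simp
      have h2' : (Dv (nuStep w)).getD m 0 = 0 := by
        rw [Dv_getD _ m (by rw [hnslen]; omega), hnsi m hcon]
        ring
      rw [h2', hrdv0] at h1'
      norm_num at h1'
    have hlast1 : (Dv (nuStep w)).getLastD 0 = (rdv v).getLastD 0 := by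
      rw [hm]; exact getLastD_append_right _ _ hrdvne
    have hlast2 : (Dv (nuStep w)).getLastD 0 = ((leader w : ℤ) - 1) - (↑((nuStep w).length - 1) : ℤ) := by
      rw [Dv_getLastD (nuStep w) hnsne, hnslast]
    rw [hlast2, hrdvlast, hnslen] at hlast1
    omega
  -- Part 3
  have part3 : ∀ c : DyckClass, ¬ nuClassRel (cls (nuStep v)) c := by
    rintro c ⟨w, hw, hc1, -⟩
    have hequiv : dyckEquiv (nuStep v) w := Quotient.exact hc1
    have hrd : rdv (nuStep v) = rdv w := rdv_equiv hequiv
    obtain ⟨⟨hwhead, hwstep⟩, hwlen2, hw1, hwla⟩ := hw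
    -- facts about nuStep v
    have hnslen : (nuStep v).length = v.length := by rw [hnsv]; simp; omega
    have hnsne : nuStep v ≠ [] := by apply List.ne_nil_of_length_pos; omega
    have hnsgetD : ∀ i, i < v.length - 1 → (nuStep v).getD i 0 = v.getD (i+1) 0 := by
      intro i hi
      rw [hnsv, List.getD_append _ _ _ _ (by simp; omega),
        List.getD_eq_getElem _ _ (by simp; omega), List.getElem_drop,
        ← List.getD_eq_getElem _ _ (show 1 + i < v.length by omega)]
      congr 1
      omega
    have hDns0 : (Dv (nuStep v)).getD 0 0 = 0 := by
      rw [Dv_getD _ 0 (by omega), hnsgetD 0 (by omega), h1]; simp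
    have hDns1 : (Dv (nuStep v)).getD 1 0 = 0 := by
      rw [Dv_getD _ 1 (by omega), hnsgetD 1 (by omega), h2]; simp
    have hDns2 : (Dv (nuStep v)).getD 2 0 = 0 := by
      rw [Dv_getD _ 2 (by omega), hnsgetD 2 (by omega), h3]; simp
    have hnslastv : (nuStep v).getLastD 0 = -1 := by
      rw [hnsv]; exact getLastD_concat' _ _
    have hDnslen : (Dv (nuStep v)).length = v.length := by rw [Dv_length, hnslen]
    have hDnsne : Dv (nuStep v) ≠ [] := by apply List.ne_nil_of_length_pos; omega
    have hDnslast : (Dv (nuStep v)).getLastD 0 = -1 - (↑(v.length - 1) : ℤ) := by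
      rw [Dv_getLastD (nuStep v) hnsne, hnslastv, hnslen]
    -- the reduced invariant c := rdv (nuStep v)
    have hclen : (rdv (nuStep v)).length ≤ v.length - 3 := by
      rcases hDl : Dv (nuStep v) with _|⟨a, r1⟩
      · rw [hDl] at hDnsne; simp at hDnsne
      rcases r1 with _|⟨b, r2⟩
      · have := congrArg List.length hDl; simp at this; omega
      rcases r2 with _|⟨cc, r⟩
      · have := congrArg List.length hDl; simp at this; omega
      have hlenr : r.length = v.length - 3 := by
        have := congrArg List.length hDl; simp at this; omega
      have ha : a = 0 := by rw [hDl] at hDns0; simpa using hDns0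
      have hb : b = 0 := by rw [hDl] at hDns1; simpa using hDns1
      have hcc : cc = 0 := by rw [hDl] at hDns2; simpa using hDns2
      unfold rdv
      rw [hDl, ha, hb, hcc, List.dropWhile_cons_of_pos (by simp),
        List.dropWhile_cons_of_pos (by simp), List.dropWhile_cons_of_pos (by simp)]
      have hsplit := congrArg List.length
        (List.takeWhile_append_dropWhile (p := fun x => x == (0:ℤ)) (l := r))
      simp only [List.length_append] at hsplit
      omega
    have hcne : rdv (nuStep v) ≠ [] := by
      intro hc
      have hall : ∀ x ∈ Dv (nuStep v), (fun x => x == (0:ℤ)) x := List.dropWhile_eq_nil_iff.mp hc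
      have hmem := getLastD_mem (Dv (nuStep v)) hDnsne
      have := hall _ hmem
      rw [hDnslast] at this
      simp at this
      omega
    have hclast : (rdv (nuStep v)).getLastD 0 = -1 - (↑(v.length - 1) : ℤ) := by
      obtain ⟨m', hm'⟩ := Dv_decomp (nuStep v)
      rw [← hDnslast, hm']
      exact (getLastD_append_right _ _ hcne).symm
    have hc0 := rdv_head_ne hcne
    -- now analyze w
    obtain ⟨k, hk⟩ := Dv_decomp w
    rw [← hrd] at hk
    have hwlen : w.length = k + (rdv (nuStep v)).length := by
      have := congrArg List.length hk
      rw [Dv_length] at this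
      simp at this
      omega
    have hclen1 : 1 ≤ (rdv (nuStep v)).length := by
      have := List.length_pos_iff.2 hcne; omega
    have hwne : w ≠ [] := by intro h; rw [h] at hwlen2; simp at hwlen2
    have hw0 : w.getD 0 0 = 0 := by
      rcases w with _ | ⟨a, w'⟩
      · simp at hwlen2
      · simp only [List.head?_cons, Option.some_inj] at hwhead
        simp [hwhead]
    have hk1 : 1 ≤ k := by
      by_contra hcon
      have hk0 : k = 0 := by omega
      rw [hk0] at hk
      simp at hk
      have : (Dv w).getD 0 0 = 0 := by
        rw [Dv_getD w 0 (by omega), hw0]; simp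
      rw [hk] at this
      exact hc0 this
    have hlead : leader w = k - 1 := by
      apply leader_eq_k w k hk1 (by omega)
      · intro i hi
        have hz : (Dv w).getD i 0 = 0 := by
          rw [hk, List.getD_append _ _ _ _ (by simp; omega)]
          exact getD_replicate_zero k i hi
        rw [Dv_getD w i (by omega)] at hz
        omega
      · intro hcon
        have hz : (Dv w).getD k 0 = (rdv (nuStep v)).getD 0 0 := by
          rw [hk, List.getD_append_right _ _ _ _ (by simp)]
          simp
        rw [Dv_getD w k (by omega), hcon] at hz
        apply hc0
        omega
    have hwlast : w.getLastD 0 = (rdv (nuStep v)).getLastD 0 + (↑(w.length - 1) : ℤ) := by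
      have e1 : (Dv w).getLastD 0 = w.getLastD 0 - (↑(w.length - 1) : ℤ) := Dv_getLastD w hwne
      have e2 : (Dv w).getLastD 0 = (rdv (nuStep v)).getLastD 0 := by
        rw [hk]; exact getLastD_append_right _ _ hcne
      rw [e2] at e1
      linarith
    rw [hlead] at hwla
    rw [hwlast, hclast] at hwla
    omega
  exact ⟨part1, part2, part3, part4, part5⟩
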